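/- Let α > 0 and let h ∈ C¹([0,∞)×[0,∞)) have ‖h‖_X ≤ x, where ‖h‖_X = sup_{u,r≥0}[(1+r+u)²|h(u,r)| + (1+r+u)³|∂h/∂r(u,r)|], and assume |sin h̄(u,r)| ≤ |h(u,r) − h̄(u,r)| for all u ≥ 0, r > 0. Then the radial derivative of the metric function g equals ∂g/∂r(u,r) = α·g(u,r)·((h(u,r)−h̄(u,r))²/r)(1 + 2 sin²h̄(u,r)/r²), and it satisfies 0 ≤ ∂g/∂r(u,r) ≤ α(x² + x⁴)·r/(4(1+r+u)⁴(1+u)²). -/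

import Mathlib

noncomputable section
open Real MeasureTheory Set

/-- Radial average `h̄(u,r) = (1/r)∫₀ʳ h(u,s) ds`. -/
def hbar (h : ℝ → ℝ → ℝ) (u r : ℝ) : ℝ := (1 / r) * ∫ s in (0:ℝ)..r, h u s

/-- Bondi metric function `g`. -/
def gmet (α : ℝ) (h : ℝ → ℝ → ℝ) (u r : ℝ) : ℝ :=
  Real.exp (-α * ∫ s in Set.Ioi r,
    ((h u s - hbar h u s) ^ 2 / s) * (1 + 2 * Real.sin (hbar h u s) ^ 2 / s ^ 2))

/-- Radial average of `g`. -/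
def gbarm (α : ℝ) (h : ℝ → ℝ → ℝ) (u r : ℝ) : ℝ := (1 / r) * ∫ s in (0:ℝ)..r, gmet α h u s

/-- Bondi metric function `g̃`. -/
def gtil (α : ℝ) (h : ℝ → ℝ → ℝ) (u r : ℝ) : ℝ :=
  gbarm α h u r - (α / r) * ∫ s in (0:ℝ)..r,
    s ^ 2 * gmet α h u s *
      (2 * Real.sin (hbar h u s) ^ 2 / s ^ 2 + Real.sin (hbar h u s) ^ 4 / s ^ 4)

namespace BondiAux

variable {h : ℝ → ℝ → ℝ} {x u : ℝ}

lemma slice_contDiffOn (hC1 : ContDiffOn ℝ 1 (fun p : ℝ × ℝ => h p.1 p.2) (Set.Ici 0 ×ˢ Set.Ici 0))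
    (hu : 0 ≤ u) : ContDiffOn ℝ 1 (fun s => h u s) (Ici 0) := by
  have : (fun s => h u s) = (fun p : ℝ × ℝ => h p.1 p.2) ∘ (fun s : ℝ => (u, s)) := rfl
  rw [this]
  exact hC1.comp ((contDiff_const.prodMk contDiff_id).contDiffOn)
    (fun s hs => Set.mem_prod.2 ⟨hu, hs⟩)

lemma slice_hasDerivAt (hC1 : ContDiffOn ℝ 1 (fun p : ℝ × ℝ => h p.1 p.2) (Set.Ici 0 ×ˢ Set.Ici 0))
    (hu : 0 ≤ u) {s : ℝ} (hs : 0 < s) :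
    HasDerivAt (fun t => h u t) (deriv (fun t => h u t) s) s := by
  have hd : DifferentiableOn ℝ (fun t => h u t) (Ici 0) :=
    (slice_contDiffOn hC1 hu).differentiableOn one_ne_zero
  exact (hd.differentiableAt (Ici_mem_nhds hs)).hasDerivAt

lemma slice_deriv_continuousOn
    (hC1 : ContDiffOn ℝ 1 (fun p : ℝ × ℝ => h p.1 p.2) (Set.Ici 0 ×ˢ Set.Ici 0))
    (hu : 0 ≤ u) : ContinuousOn (deriv (fun t => h u t)) (Ioi 0) := by
  have h1 := ((slice_contDiffOn hC1 hu).continuousOn_derivWithin (uniqueDiffOn_Ici 0) le_rfl)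
  refine (h1.mono Ioi_subset_Ici_self).congr ?_
  intro s hs
  exact (derivWithin_of_mem_nhds (Ici_mem_nhds hs)).symm

lemma x_nonneg (hnorm : ∀ u : ℝ, 0 ≤ u → ∀ r : ℝ, 0 ≤ r →
      (1 + r + u) ^ 2 * |h u r| + (1 + r + u) ^ 3 * |deriv (fun r' => h u r') r| ≤ x) :
    0 ≤ x :=
  le_trans (by positivity) (hnorm 0 le_rfl 0 le_rfl)

lemma abs_h_le (hnorm : ∀ u : ℝ, 0 ≤ u → ∀ r : ℝ, 0 ≤ r →
      (1 + r + u) ^ 2 * |h u r| + (1 + r + u) ^ 3 * |deriv (fun r' => h u r') r| ≤ x)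
    (hu : 0 ≤ u) {r : ℝ} (hr : 0 ≤ r) : |h u r| ≤ x / (1 + r + u) ^ 2 := by
  have hp : (0:ℝ) < 1 + r + u := by linarith
  rw [le_div_iff₀ (by positivity)]
  nlinarith [hnorm u hu r hr, abs_nonneg (deriv (fun r' => h u r') r), pow_pos hp 3]

lemma abs_deriv_le (hnorm : ∀ u : ℝ, 0 ≤ u → ∀ r : ℝ, 0 ≤ r →
      (1 + r + u) ^ 2 * |h u r| + (1 + r + u) ^ 3 * |deriv (fun r' => h u r') r| ≤ x)
    (hu : 0 ≤ u) {r : ℝ} (hr : 0 ≤ r) :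
    |deriv (fun r' => h u r') r| ≤ x / (1 + r + u) ^ 3 := by
  have hp : (0:ℝ) < 1 + r + u := by linarith
  rw [le_div_iff₀ (by positivity)]
  nlinarith [hnorm u hu r hr, abs_nonneg (h u r), pow_pos hp 2]

lemma abs_deriv_le' (hnorm : ∀ u : ℝ, 0 ≤ u → ∀ r : ℝ, 0 ≤ r →
      (1 + r + u) ^ 2 * |h u r| + (1 + r + u) ^ 3 * |deriv (fun r' => h u r') r| ≤ x)
    (hu : 0 ≤ u) {r : ℝ} (hr : 0 ≤ r) :
    |deriv (fun r' => h u r') r| ≤ x := by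
  refine (abs_deriv_le hnorm hu hr).trans ?_
  have hp : (1:ℝ) ≤ 1 + r + u := by linarith
  have hx : 0 ≤ x := x_nonneg hnorm
  exact div_le_self hx (one_le_pow₀ hp)




lemma had_inv1 {c t : ℝ} (h : c + t ≠ 0) :
    HasDerivAt (fun τ => -(c + τ)⁻¹) (((c + t) ^ 2)⁻¹) t := by
  have h1 : HasDerivAt (fun τ : ℝ => c + τ) 1 t := (hasDerivAt_id t).const_add c
  have h2 := (h1.inv h).neg
  refine h2.congr_deriv ?_
  ring

lemma had_inv2 {c t : ℝ} (h : c + t ≠ 0) :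
    HasDerivAt (fun τ => -(1/2) * ((c + τ) ^ 2)⁻¹) (((c + t) ^ 3)⁻¹) t := by
  have h1 : HasDerivAt (fun τ : ℝ => (c + τ) ^ 2) (2 * (c + t)) t := by
    have := ((hasDerivAt_id t).const_add c).fun_pow 2
    simpa using this
  have h2 := (h1.inv (pow_ne_zero 2 h)).const_mul (-(1/2) : ℝ)
  refine h2.congr_deriv ?_
  field_simp

lemma cont_inv_pow (c : ℝ) (n : ℕ) {s : Set ℝ} (hs : ∀ t ∈ s, c + t ≠ 0) :
    ContinuousOn (fun t : ℝ => ((c + t) ^ n)⁻¹) s :=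
  (((continuous_const.add continuous_id).pow n).continuousOn).inv₀
    (fun t ht => pow_ne_zero n (hs t ht))

lemma ne_zero_of_uIcc {c a b : ℝ} (hc : 0 < c) (h0 : 0 ≤ a) (hab : a ≤ b) :
    ∀ t ∈ uIcc a b, c + t ≠ 0 := by
  intro t ht
  rw [uIcc_of_le hab] at ht
  have h1 := ht.1
  have : 0 < c + t := by linarith
  exact this.ne'

lemma integral_inv_pow2 {c a b : ℝ} (hc : 0 < c) (h0 : 0 ≤ a) (hab : a ≤ b) :
    (∫ t in a..b, ((c + t) ^ 2)⁻¹) = (c + a)⁻¹ - (c + b)⁻¹ := by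
  have hne := ne_zero_of_uIcc hc h0 hab
  rw [intervalIntegral.integral_eq_sub_of_hasDerivAt
      (fun t ht => had_inv1 (hne t ht))
      ((cont_inv_pow c 2 hne).intervalIntegrable)]
  ring

lemma integral_inv_pow3 {c a b : ℝ} (hc : 0 < c) (h0 : 0 ≤ a) (hab : a ≤ b) :
    (∫ t in a..b, ((c + t) ^ 3)⁻¹) = (1/2) * (((c + a) ^ 2)⁻¹ - ((c + b) ^ 2)⁻¹) := by
  have hne := ne_zero_of_uIcc hc h0 hab
  rw [intervalIntegral.integral_eq_sub_of_hasDerivAt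
      (fun t ht => had_inv2 (hne t ht))
      ((cont_inv_pow c 3 hne).intervalIntegrable)]
  ring


end BondiAux

namespace BondiAux
variable {h : ℝ → ℝ → ℝ} {x u : ℝ}

lemma deriv_intervalIntegrable
    (hC1 : ContDiffOn ℝ 1 (fun p : ℝ × ℝ => h p.1 p.2) (Set.Ici 0 ×ˢ Set.Ici 0))
    (hnorm : ∀ u : ℝ, 0 ≤ u → ∀ r : ℝ, 0 ≤ r →
      (1 + r + u) ^ 2 * |h u r| + (1 + r + u) ^ 3 * |deriv (fun r' => h u r') r| ≤ x)
    (hu : 0 ≤ u) {t r : ℝ} (ht : 0 ≤ t) (htr : t ≤ r) :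
    IntervalIntegrable (deriv (fun s => h u s)) volume t r := by
  rw [intervalIntegrable_iff_integrableOn_Ioc_of_le htr]
  apply Measure.integrableOn_of_bounded (measure_Ioc_lt_top).ne
    ((measurable_deriv _).aestronglyMeasurable) (M := x)
  filter_upwards [ae_restrict_mem measurableSet_Ioc] with τ hτ
  have hτ0 : 0 ≤ τ := le_of_lt (lt_of_le_of_lt ht hτ.1)
  simpa [Real.norm_eq_abs] using abs_deriv_le' hnorm hu hτ0

lemma sub_le_pointwise
    (hC1 : ContDiffOn ℝ 1 (fun p : ℝ × ℝ => h p.1 p.2) (Set.Ici 0 ×ˢ Set.Ici 0))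
    (hnorm : ∀ u : ℝ, 0 ≤ u → ∀ r : ℝ, 0 ≤ r →
      (1 + r + u) ^ 2 * |h u r| + (1 + r + u) ^ 3 * |deriv (fun r' => h u r') r| ≤ x)
    (hu : 0 ≤ u) {t r : ℝ} (ht : 0 ≤ t) (htr : t ≤ r) :
    |h u r - h u t| ≤ (x/2) * ((((1+u) + t) ^ 2)⁻¹ - (((1+u) + r) ^ 2)⁻¹) := by
  have hc : (0:ℝ) < 1 + u := by linarith
  have hint := deriv_intervalIntegrable hC1 hnorm hu ht htr (x := x)
  have hFTC : ∫ τ in t..r, deriv (fun s => h u s) τ = h u r - h u t := by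
    apply intervalIntegral.integral_eq_sub_of_hasDeriv_right_of_le htr
    · exact ((slice_contDiffOn hC1 hu).continuousOn).mono
        (fun τ hτ => le_trans ht hτ.1)
    · intro τ hτ
      exact (slice_hasDerivAt hC1 hu (lt_of_le_of_lt ht hτ.1)).hasDerivWithinAt
    · exact hint
  rw [← hFTC]
  have hb : ‖∫ τ in t..r, deriv (fun s => h u s) τ‖ ≤
      |∫ τ in t..r, x * (((1+u) + τ) ^ 3)⁻¹| := by
    apply intervalIntegral.norm_integral_le_abs_of_norm_le
    · filter_upwards [ae_restrict_mem measurableSet_uIoc] with τ hτ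
      rw [uIoc_of_le htr] at hτ
      have hτ0 : 0 ≤ τ := le_of_lt (lt_of_le_of_lt ht hτ.1)
      have := abs_deriv_le hnorm hu hτ0 (x := x)
      rw [Real.norm_eq_abs]
      calc |deriv (fun s => h u s) τ| ≤ x / (1 + τ + u) ^ 3 := this
        _ = x * (((1+u) + τ) ^ 3)⁻¹ := by rw [div_eq_mul_inv]; ring_nf
    · exact (ContinuousOn.intervalIntegrable
        ((cont_inv_pow (1+u) 3 (ne_zero_of_uIcc hc ht htr)).const_smul x))
  rw [Real.norm_eq_abs] at hb
  refine hb.trans ?_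
  rw [intervalIntegral.integral_const_mul, integral_inv_pow3 hc ht htr]
  have hx : 0 ≤ x := x_nonneg hnorm
  have h1 : (((1+u) + t) ^ 2)⁻¹ - (((1+u) + r) ^ 2)⁻¹ ≥ 0 := by
    have ht2 : (0:ℝ) < ((1+u)+t)^2 := by positivity
    have hr2 : ((1+u)+t)^2 ≤ ((1+u)+r)^2 := by nlinarith
    have := inv_anti₀ ht2 hr2
    linarith
  rw [abs_of_nonneg (by nlinarith)]
  ring_nf
  exact le_refl _

end BondiAux

namespace BondiAux
variable {h : ℝ → ℝ → ℝ} {x u : ℝ}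

lemma hbar_diff_bound
    (hC1 : ContDiffOn ℝ 1 (fun p : ℝ × ℝ => h p.1 p.2) (Set.Ici 0 ×ˢ Set.Ici 0))
    (hnorm : ∀ u : ℝ, 0 ≤ u → ∀ r : ℝ, 0 ≤ r →
      (1 + r + u) ^ 2 * |h u r| + (1 + r + u) ^ 3 * |deriv (fun r' => h u r') r| ≤ x)
    (hu : 0 ≤ u) {r : ℝ} (hr : 0 < r) :
    |h u r - hbar h u r| ≤ x * r / (2 * (1+u) * ((1+u) + r) ^ 2) := by
  have hc : (0:ℝ) < 1 + u := by linarith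
  have hx : 0 ≤ x := x_nonneg hnorm
  have hint_h : IntervalIntegrable (fun t => h u t) volume 0 r := by
    apply ContinuousOn.intervalIntegrable
    exact ((slice_contDiffOn hC1 hu).continuousOn).mono
      (by rw [uIcc_of_le hr.le]; exact fun t ht => ht.1)
  have key : h u r - hbar h u r = (1/r) * ∫ t in (0:ℝ)..r, (h u r - h u t) := by
    rw [hbar, intervalIntegral.integral_sub intervalIntegrable_const hint_h,
      intervalIntegral.integral_const]
    field_simp
    ring
  have gcont : ContinuousOn
      (fun t : ℝ => (x/2) * ((((1+u)+t)^2)⁻¹ - (((1+u)+r)^2)⁻¹)) (uIcc 0 r) :=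
    (((cont_inv_pow (1+u) 2 (ne_zero_of_uIcc hc le_rfl hr.le)).sub
      continuousOn_const).const_smul (x/2))
  have hb : ‖∫ t in (0:ℝ)..r, (h u r - h u t)‖ ≤
      |∫ t in (0:ℝ)..r, (x/2) * ((((1+u)+t)^2)⁻¹ - (((1+u)+r)^2)⁻¹)| := by
    apply intervalIntegral.norm_integral_le_abs_of_norm_le
    · filter_upwards [ae_restrict_mem measurableSet_uIoc] with t ht
      rw [uIoc_of_le hr.le] at ht
      rw [Real.norm_eq_abs]
      exact sub_le_pointwise hC1 hnorm hu ht.1.le ht.2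
    · exact gcont.intervalIntegrable
  have hval : (∫ t in (0:ℝ)..r, (x/2) * ((((1+u)+t)^2)⁻¹ - (((1+u)+r)^2)⁻¹))
      = x * r^2 / (2 * (1+u) * ((1+u)+r)^2) := by
    have int1 : IntervalIntegrable (fun t : ℝ => (((1+u)+t)^2)⁻¹) volume 0 r :=
      (cont_inv_pow (1+u) 2 (ne_zero_of_uIcc hc le_rfl hr.le)).intervalIntegrable
    rw [intervalIntegral.integral_const_mul,
      intervalIntegral.integral_sub int1 intervalIntegrable_const,
      integral_inv_pow2 hc le_rfl hr.le, intervalIntegral.integral_const]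
    have hcr : (0:ℝ) < (1+u) + r := by linarith
    have h0 : (1+u) + 0 = (1+u) := by ring
    rw [h0, smul_eq_mul]
    field_simp
    ring
  rw [key, abs_mul, abs_of_nonneg (by positivity : (0:ℝ) ≤ 1/r)]
  rw [Real.norm_eq_abs] at hb
  rw [hval] at hb
  have hcr : (0:ℝ) < (1+u) + r := by linarith
  have habs : |x * r^2 / (2 * (1+u) * ((1+u)+r)^2)| = x * r^2 / (2 * (1+u) * ((1+u)+r)^2) :=
    abs_of_nonneg (by positivity)
  rw [habs] at hb
  calc (1/r) * |∫ t in (0:ℝ)..r, (h u r - h u t)|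
      ≤ (1/r) * (x * r^2 / (2 * (1+u) * ((1+u)+r)^2)) := by
        apply mul_le_mul_of_nonneg_left hb (by positivity)
    _ = x * r / (2 * (1+u) * ((1+u)+r)^2) := by field_simp

end BondiAux

namespace BondiAux
variable {h : ℝ → ℝ → ℝ} {x u : ℝ}

lemma F_algebra {D S x r a : ℝ} (ha : 1 ≤ a) (hr : 0 < r) (hx : 0 ≤ x)
    (hS : |S| ≤ |D|) (hD : |D| ≤ x * r / (2 * a * (a + r) ^ 2)) :
    (D ^ 2 / r) * (1 + 2 * S ^ 2 / r ^ 2) ≤ (x ^ 2 + x ^ 4) * r / (4 * (a + r) ^ 4 * a ^ 2) := by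
  have ha0 : (0:ℝ) < a := by linarith
  have har : (0:ℝ) < a + r := by linarith
  have har1 : (1:ℝ) ≤ a + r := by linarith
  set B := x * r / (2 * a * (a + r) ^ 2) with hBdef
  have hB0 : 0 ≤ B := by positivity
  have hD2 : D ^ 2 ≤ B ^ 2 := by
    calc D ^ 2 = |D| ^ 2 := (sq_abs D).symm
      _ ≤ B ^ 2 := pow_le_pow_left₀ (abs_nonneg D) hD 2
  have hS2 : S ^ 2 ≤ D ^ 2 := by
    calc S ^ 2 = |S| ^ 2 := (sq_abs S).symm
      _ ≤ |D| ^ 2 := pow_le_pow_left₀ (abs_nonneg S) hS 2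
      _ = D ^ 2 := sq_abs D
  have hDS : D ^ 2 * S ^ 2 ≤ B ^ 2 * B ^ 2 :=
    mul_le_mul hD2 (hS2.trans hD2) (sq_nonneg S) (by positivity)
  have e1 : (D ^ 2 / r) * (1 + 2 * S ^ 2 / r ^ 2) = D ^ 2 / r + 2 * (D ^ 2 * S ^ 2) / r ^ 3 := by
    field_simp
  rw [e1]
  have t1 : D ^ 2 / r ≤ x ^ 2 * r / (4 * a ^ 2 * (a + r) ^ 4) := by
    calc D ^ 2 / r ≤ B ^ 2 / r := by gcongr
      _ = x ^ 2 * r / (4 * a ^ 2 * (a + r) ^ 4) := by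
          rw [hBdef]; field_simp; ring
  have t2 : 2 * (D ^ 2 * S ^ 2) / r ^ 3 ≤ x ^ 4 * r / (4 * a ^ 2 * (a + r) ^ 4) := by
    calc 2 * (D ^ 2 * S ^ 2) / r ^ 3 ≤ 2 * (B ^ 2 * B ^ 2) / r ^ 3 := by gcongr
      _ = x ^ 4 * r / (8 * a ^ 4 * (a + r) ^ 8) := by rw [hBdef]; field_simp; ring
      _ ≤ x ^ 4 * r / (4 * a ^ 2 * (a + r) ^ 4) := by
          have h1 : (1:ℝ) ≤ a ^ 2 := one_le_pow₀ ha
          have h2 : (1:ℝ) ≤ (a + r) ^ 4 := one_le_pow₀ har1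
          gcongr <;> first | exact ha | exact har1 | norm_num
  have e2 : (x ^ 2 + x ^ 4) * r / (4 * (a + r) ^ 4 * a ^ 2)
      = x ^ 2 * r / (4 * a ^ 2 * (a + r) ^ 4) + x ^ 4 * r / (4 * a ^ 2 * (a + r) ^ 4) := by
    field_simp
  rw [e2]
  exact add_le_add t1 t2

lemma hbar_continuousOn
    (hC1 : ContDiffOn ℝ 1 (fun p : ℝ × ℝ => h p.1 p.2) (Set.Ici 0 ×ˢ Set.Ici 0))
    (hu : 0 ≤ u) : ContinuousOn (fun s => hbar h u s) (Ioi 0) := by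
  intro s hs
  apply ContinuousAt.continuousWithinAt
  have hcs : ContinuousOn (fun t => h u t) (Ici 0) := (slice_contDiffOn hC1 hu).continuousOn
  have hs0 : (0:ℝ) < s := hs
  have hint : IntervalIntegrable (fun t => h u t) volume 0 s :=
    (hcs.mono (by rw [uIcc_of_le hs0.le]; exact fun t ht => ht.1)).intervalIntegrable
  have hmeas : StronglyMeasurableAtFilter (fun t => h u t) (nhds s) volume :=
    ⟨Ioi 0, Ioi_mem_nhds hs0, (hcs.mono Ioi_subset_Ici_self).aestronglyMeasurable measurableSet_Ioi⟩
  have hca : ContinuousAt (fun t => h u t) s := hcs.continuousAt (Ici_mem_nhds hs0)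
  have hprim := (intervalIntegral.integral_hasDerivAt_right hint hmeas hca).continuousAt
  exact ((continuousAt_const.div continuousAt_id (ne_of_gt hs0)).mul hprim)

lemma F_continuousOn
    (hC1 : ContDiffOn ℝ 1 (fun p : ℝ × ℝ => h p.1 p.2) (Set.Ici 0 ×ˢ Set.Ici 0))
    (hu : 0 ≤ u) :
    ContinuousOn (fun s => ((h u s - hbar h u s) ^ 2 / s) *
      (1 + 2 * Real.sin (hbar h u s) ^ 2 / s ^ 2)) (Ioi 0) := by
  have hcb := hbar_continuousOn hC1 hu
  have hch : ContinuousOn (fun s => h u s) (Ioi 0) :=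
    (slice_contDiffOn hC1 hu).continuousOn.mono Ioi_subset_Ici_self
  have hne : ∀ s ∈ Ioi (0:ℝ), s ≠ 0 := fun s hs => ne_of_gt hs
  apply ContinuousOn.mul
  · exact ((hch.sub hcb).pow 2).div continuousOn_id hne
  · apply ContinuousOn.add continuousOn_const
    exact (continuousOn_const.mul
      ((Real.continuous_sin.comp_continuousOn hcb).pow 2)).div
      (continuousOn_id.pow 2) (fun s hs => pow_ne_zero 2 (hne s hs))

end BondiAux

/-- **Radial derivative of the Bondi metric function `g`.** If `‖h‖_X ≤ x` and
`|sin h̄| ≤ |h − h̄|` pointwise, then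
`∂g/∂r = α g ((h−h̄)²/r)(1 + 2 sin²h̄/r²)`, and
`0 ≤ ∂g/∂r ≤ α(x²+x⁴)r/(4(1+r+u)⁴(1+u)²)`. -/
theorem gmet_deriv_formula_and_bound
    (α x : ℝ) (hα : 0 < α)
    (h : ℝ → ℝ → ℝ)
    (hC1 : ContDiffOn ℝ 1 (fun p : ℝ × ℝ => h p.1 p.2) (Set.Ici 0 ×ˢ Set.Ici 0))
    (hnorm : ∀ u : ℝ, 0 ≤ u → ∀ r : ℝ, 0 ≤ r →
      (1 + r + u) ^ 2 * |h u r| +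
        (1 + r + u) ^ 3 * |deriv (fun r' => h u r') r| ≤ x)
    (hsin : ∀ u : ℝ, 0 ≤ u → ∀ r : ℝ, 0 < r →
      |Real.sin (hbar h u r)| ≤ |h u r - hbar h u r|) :
    ∀ u : ℝ, 0 ≤ u → ∀ r : ℝ, 0 < r →
      deriv (fun r' => gmet α h u r') r =
        α * gmet α h u r * ((h u r - hbar h u r) ^ 2 / r) *
          (1 + 2 * Real.sin (hbar h u r) ^ 2 / r ^ 2) ∧
      0 ≤ deriv (fun r' => gmet α h u r') r ∧
      deriv (fun r' => gmet α h u r') r ≤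
        α * (x ^ 2 + x ^ 4) * r / (4 * (1 + r + u) ^ 4 * (1 + u) ^ 2) := by
  intro u hu r hr
  set F : ℝ → ℝ := fun s =>
    ((h u s - hbar h u s) ^ 2 / s) * (1 + 2 * Real.sin (hbar h u s) ^ 2 / s ^ 2) with hFdef
  have hx : 0 ≤ x := BondiAux.x_nonneg hnorm
  have hFcont : ContinuousOn F (Ioi 0) := BondiAux.F_continuousOn hC1 hu
  have hFnonneg : ∀ s : ℝ, 0 < s → 0 ≤ F s := by
    intro s hs
    apply mul_nonneg (div_nonneg (sq_nonneg _) hs.le)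
    have h2 : 0 ≤ 2 * Real.sin (hbar h u s) ^ 2 / s ^ 2 := by positivity
    linarith
  have hFbound : ∀ s : ℝ, 0 < s →
      F s ≤ (x ^ 2 + x ^ 4) * s / (4 * (1 + s + u) ^ 4 * (1 + u) ^ 2) := by
    intro s hs
    have hd := BondiAux.hbar_diff_bound hC1 hnorm hu hs
    have hsin' := hsin u hu s hs
    have hkey := BondiAux.F_algebra (a := 1 + u) (by linarith) hs hx hsin' hd
    calc F s = ((h u s - hbar h u s) ^ 2 / s) *
        (1 + 2 * Real.sin (hbar h u s) ^ 2 / s ^ 2) := rfl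
      _ ≤ (x ^ 2 + x ^ 4) * s / (4 * ((1 + u) + s) ^ 4 * (1 + u) ^ 2) := hkey
      _ = (x ^ 2 + x ^ 4) * s / (4 * (1 + s + u) ^ 4 * (1 + u) ^ 2) := by ring_nf
  have hFint : ∀ c : ℝ, 0 < c → IntegrableOn F (Set.Ioi c) := by
    intro c hc
    have hmaj : IntegrableOn (fun s : ℝ => (x ^ 2 + x ^ 4) / 4 * s ^ (-3 : ℝ)) (Set.Ioi c) :=
      (integrableOn_Ioi_rpow_of_lt (by norm_num) hc).const_mul _
    apply Integrable.mono' hmaj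
    · exact (hFcont.mono (fun s hs => hc.trans hs)).aestronglyMeasurable measurableSet_Ioi
    · filter_upwards [ae_restrict_mem measurableSet_Ioi] with s hs
      have hs0 : 0 < s := hc.trans hs
      rw [Real.norm_eq_abs, abs_of_nonneg (hFnonneg s hs0)]
      have hrp : s ^ (-3 : ℝ) = (s ^ (3:ℕ))⁻¹ := by
        rw [show (-3 : ℝ) = -((3:ℕ) : ℝ) by norm_num, Real.rpow_neg hs0.le, Real.rpow_natCast]
      calc F s ≤ (x ^ 2 + x ^ 4) * s / (4 * (1 + s + u) ^ 4 * (1 + u) ^ 2) := hFbound s hs0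
        _ ≤ (x ^ 2 + x ^ 4) * s / (4 * s ^ 4) := by
            have hden : 4 * s ^ 4 ≤ 4 * (1 + s + u) ^ 4 * (1 + u) ^ 2 := by
              have h1 : s ^ 4 ≤ (1 + s + u) ^ 4 := pow_le_pow_left₀ hs0.le (by linarith) 4
              have h2 : (1:ℝ) ≤ (1 + u) ^ 2 := one_le_pow₀ (by linarith)
              nlinarith [mul_le_mul_of_nonneg_left h2
                (show (0:ℝ) ≤ 4 * (1 + s + u) ^ 4 by positivity)]
            gcongr
        _ = (x ^ 2 + x ^ 4) / 4 * s ^ (-3 : ℝ) := by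
            rw [hrp]
            field_simp
  have hG : HasDerivAt (fun r' : ℝ => ∫ s in Set.Ioi r', F s) (-(F r)) r := by
    have hc2 : 0 < r / 2 := by linarith
    have hcr : r / 2 < r := by linarith
    have hintc : IntegrableOn F (Set.Ioi (r / 2)) := hFint _ hc2
    have hII : IntervalIntegrable F volume (r / 2) r :=
      (intervalIntegrable_iff_integrableOn_Ioc_of_le hcr.le).2
        (hintc.mono_set Set.Ioc_subset_Ioi_self)
    have hmeas : StronglyMeasurableAtFilter F (nhds r) volume :=
      ⟨Set.Ioi 0, Ioi_mem_nhds hr, hFcont.aestronglyMeasurable measurableSet_Ioi⟩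
    have hca : ContinuousAt F r := hFcont.continuousAt (Ioi_mem_nhds hr)
    have hψ : HasDerivAt (fun r' => (∫ s in Set.Ioi (r / 2), F s) - ∫ s in (r/2)..r', F s)
        (-(F r)) r := by
      have h2 := intervalIntegral.integral_hasDerivAt_right hII hmeas hca
      simpa using h2.const_sub _
    apply hψ.congr_of_eventuallyEq
    filter_upwards [Ioi_mem_nhds hcr] with r' hr'
    have hr'2 : r / 2 < r' := hr'
    have hsplit := setIntegral_union (Set.Ioc_disjoint_Ioi le_rfl) measurableSet_Ioi
      (hintc.mono_set Set.Ioc_subset_Ioi_self) (hFint r' (hc2.trans hr'2))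
      (f := F) (μ := volume)
    rw [Set.Ioc_union_Ioi_eq_Ioi hr'2.le] at hsplit
    rw [intervalIntegral.integral_of_le hr'2.le]
    linarith [hsplit]
  have hfun : (fun r' => gmet α h u r') =
      (fun r' => Real.exp (-α * ∫ s in Set.Ioi r', F s)) := rfl
  have hpt : gmet α h u r = Real.exp (-α * ∫ s in Set.Ioi r, F s) := rfl
  have hD : deriv (fun r' => gmet α h u r') r = α * gmet α h u r * F r := by
    rw [hfun, ((hG.const_mul (-α)).exp).deriv, hpt]
    ring
  have hgpos : 0 < gmet α h u r := by rw [hpt]; exact Real.exp_pos _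
  have hg1 : gmet α h u r ≤ 1 := by
    rw [hpt]
    have hI : 0 ≤ ∫ s in Set.Ioi r, F s :=
      setIntegral_nonneg measurableSet_Ioi (fun s hs => hFnonneg s (hr.trans hs))
    have hle : -α * ∫ s in Set.Ioi r, F s ≤ 0 := by nlinarith
    calc Real.exp (-α * ∫ s in Set.Ioi r, F s) ≤ Real.exp 0 := Real.exp_le_exp.2 hle
      _ = 1 := Real.exp_zero
  refine ⟨?_, ?_, ?_⟩
  · rw [hD, hFdef]
    ring
  · rw [hD]
    exact mul_nonneg (mul_nonneg hα.le hgpos.le) (hFnonneg r hr)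
  · rw [hD]
    calc α * gmet α h u r * F r ≤ α * 1 * F r :=
        mul_le_mul_of_nonneg_right (mul_le_mul_of_nonneg_left hg1 hα.le) (hFnonneg r hr)
      _ = α * F r := by ring
      _ ≤ α * ((x ^ 2 + x ^ 4) * r / (4 * (1 + r + u) ^ 4 * (1 + u) ^ 2)) :=
        mul_le_mul_of_nonneg_left (hFbound r hr) hα.le
      _ = α * (x ^ 2 + x ^ 4) * r / (4 * (1 + r + u) ^ 4 * (1 + u) ^ 2) := by ring


end
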